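/- arXiv:1501.03419 — 8 statements merged into one kernel-verified Lean document; each statement's English description precedes it below -/
import Mathlib

section
/- For A = [[a,b],[c,d]] with positive entries, the following are equivalent: (i) the induced map T_A(x) = ((a−b)x+b)/((a+c−b−d)x+b+d) is strictly concave on [0,1]; (ii) α_A = a+c−b−d > 0; (iii) ϱ_A = 2b/(β_A+γ_A) > 0; (iv) a−d+γ_A > 2b; where β_A = a−d−2b and γ_A = √((a−d)²+4bc). -/
theorem stmt_9 (a b c d : ℝ) (ha : 0 < a) (hb : 0 < b) (hc : 0 < c) (hd : 0 < d)
    (hdet : 0 < a*d - b*c) :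
    (StrictConcaveOn ℝ (Set.Icc (0:ℝ) 1)
        (fun x => ((a - b)*x + b) / ((a + c - b - d)*x + b + d))
      ↔ 0 < a + c - b - d) ∧
    (0 < a + c - b - d ↔ 0 < 2*b / (a - d - 2*b + Real.sqrt ((a - d)^2 + 4*b*c))) ∧
    (0 < 2*b / (a - d - 2*b + Real.sqrt ((a - d)^2 + 4*b*c))
      ↔ 2*b < a - d + Real.sqrt ((a - d)^2 + 4*b*c)) := by
  set γ := Real.sqrt ((a - d)^2 + 4*b*c) with hγ
  have hγsq : γ^2 = (a - d)^2 + 4*b*c := Real.sq_sqrt (by positivity)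
  have hγpos : 0 < γ := Real.sqrt_pos.mpr (by positivity)
  have iff3 : 0 < 2*b / (a - d - 2*b + γ) ↔ 2*b < a - d + γ := by
    constructor
    · intro h
      by_contra hle
      push_neg at hle
      have hden2 : a - d - 2*b + γ ≤ 0 := by linarith
      rcases lt_or_eq_of_le hden2 with h2 | h2
      · have := div_neg_of_pos_of_neg (by linarith : (0:ℝ) < 2*b) h2
        linarith
      · rw [h2, div_zero] at h
        exact lt_irrefl 0 h
    · intro h
      exact div_pos (by linarith) (by linarith)
  have iff2 : (0 < a + c - b - d ↔ 2*b < a - d + γ) := by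
    constructor
    · intro hrpos
      rcases le_or_gt (2*b - (a - d)) 0 with h | h
      · linarith
      · nlinarith [hγpos, hγsq, sq_nonneg (γ - (2*b - (a - d)))]
    · intro h
      rcases le_or_gt (2*b - (a - d)) 0 with h2 | h2
      · nlinarith
      · have h3 : 2*b - (a - d) < γ := by linarith
        have hsq : (2*b - (a - d))^2 < γ^2 := by nlinarith
        rw [hγsq] at hsq
        nlinarith
  refine ⟨?_, iff2.trans iff3.symm, iff3⟩
  set r := a + c - b - d with hr
  have hacpos : 0 < a + c := by linarith
  have hden : ∀ x ∈ Set.Icc (0:ℝ) 1, 0 < r * x + b + d := by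
    intro x hx
    obtain ⟨h0, h1⟩ := hx
    have he : r * x + b + d = (a + c) * x + (b + d) * (1 - x) := by rw [hr]; ring
    rw [he]
    rcases eq_or_lt_of_le h0 with h | h
    · rw [← h]; simp; linarith
    · have t1 : 0 < (a + c) * x := mul_pos hacpos h
      have t2 : 0 ≤ (b + d) * (1 - x) := mul_nonneg (by linarith) (by linarith)
      linarith
  constructor
  · -- strict concave → 0 < r
    intro h
    have h0 : (0:ℝ) ∈ Set.Icc (0:ℝ) 1 := by norm_num
    have h1 : (1:ℝ) ∈ Set.Icc (0:ℝ) 1 := by norm_num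
    have key := h.2 h0 h1 (by norm_num) (by norm_num : (0:ℝ) < 1/2)
      (by norm_num : (0:ℝ) < 1/2) (by norm_num)
    simp only [smul_eq_mul, mul_zero, mul_one, zero_add] at key
    rw [show a - b + b = a by ring,
        show r * (1/2 : ℝ) + b + d = (a+b+c+d)/2 by rw [hr]; ring,
        show (a - b) * (1/2 : ℝ) + b = (a+b)/2 by ring,
        show r + b + d = a + c by rw [hr]; ring] at key
    rw [mul_div_assoc', mul_div_assoc',
        div_add_div _ _ (by positivity : (b+d) ≠ 0) (ne_of_gt hacpos),
        div_lt_div_iff₀ (by positivity) (by positivity : (0:ℝ) < (a+b+c+d)/2)] at key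
    by_contra hle
    push_neg at hle
    have hq : r * (a*d - b*c) ≤ 0 := mul_nonpos_of_nonpos_of_nonneg hle hdet.le
    rw [hr] at hq
    nlinarith [key, hq]
  · -- 0 < r → strict concave
    intro hrpos
    have hcont : ContinuousOn (fun x => ((a - b)*x + b) / (r*x + b + d)) (Set.Icc (0:ℝ) 1) := by
      apply ContinuousOn.div
      · fun_prop
      · fun_prop
      · intro x hx
        exact ne_of_gt (hden x hx)
    apply strictConcaveOn_of_deriv2_neg (convex_Icc 0 1) hcont
    intro x hx
    rw [interior_Icc] at hx
    set U := {y : ℝ | 0 < r * y + b + d} with hU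
    have hUopen : IsOpen U := isOpen_lt continuous_const (by fun_prop)
    have hxU : x ∈ U := hden x ⟨hx.1.le, hx.2.le⟩
    have hd1 : ∀ y ∈ U, HasDerivAt (fun z => ((a - b)*z + b) / (r*z + b + d))
        ((a*d - b*c) / (r*y + b + d)^2) y := by
      intro y hy
      have hy0 : r * y + b + d ≠ 0 := ne_of_gt hy
      have hnum : HasDerivAt (fun z => (a - b)*z + b) (a - b) y := by
        simpa using ((hasDerivAt_id y).const_mul (a - b)).add_const b
      have hden' : HasDerivAt (fun z => r*z + b + d) r y := by
        simpa using (((hasDerivAt_id y).const_mul r).add_const b).add_const d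
      have hdd := hnum.div hden' hy0
      refine hdd.congr_deriv ?_
      rw [hr]
      field_simp
      ring
    have hderiv_eq : Set.EqOn (deriv (fun z => ((a - b)*z + b) / (r*z + b + d)))
        (fun y => (a*d - b*c) / (r*y + b + d)^2) U := by
      intro y hy
      exact (hd1 y hy).deriv
    have hd2 : HasDerivAt (fun y => (a*d - b*c) / (r*y + b + d)^2)
        (-(2*r*(a*d - b*c)) / (r*x + b + d)^3) x := by
      have hx0 : r * x + b + d ≠ 0 := ne_of_gt hxU
      have hden' : HasDerivAt (fun z => (r*z + b + d)^2) (2*(r*x+b+d)*r) x := by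
        have h' : HasDerivAt (fun z => r*z + b + d) r x := by
          simpa using (((hasDerivAt_id x).const_mul r).add_const b).add_const d
        have := h'.pow 2
        refine this.congr_deriv ?_
        ring
      have hdd := (hasDerivAt_const x (a*d - b*c)).div hden' (pow_ne_zero 2 hx0)
      refine hdd.congr_deriv ?_
      field_simp
      ring
    have hderiv2 : deriv^[2] (fun z => ((a - b)*z + b) / (r*z + b + d)) x
        = -(2*r*(a*d - b*c)) / (r*x + b + d)^3 := by
      have hmem : U ∈ nhds x := hUopen.mem_nhds hxU
      have heq : deriv (fun z => ((a - b)*z + b) / (r*z + b + d))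
          =ᶠ[nhds x] (fun y => (a*d - b*c) / (r*y + b + d)^2) :=
        Filter.eventuallyEq_of_mem hmem hderiv_eq
      rw [Function.iterate_succ, Function.iterate_one, Function.comp_apply,
        Filter.EventuallyEq.deriv_eq heq]
      exact hd2.deriv
    rw [hderiv2]
    apply div_neg_of_neg_of_pos
    · nlinarith
    · exact pow_pos hxU 3
end

section
/- For A = [[a,b],[c,d]] with positive entries and det A > 0, the following are equivalent: (i) α_A = a+c−b−d < 0; (ii) ϱ_A = 2b/(β_A+γ_A) < −1; (iii) a−d+γ_A < 2b; where β_A = a−d−2b and γ_A = √((a−d)²+4bc). -/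
theorem stmt_10 (a b c d : ℝ) (ha : 0 < a) (hb : 0 < b) (hc : 0 < c) (hd : 0 < d)
    (hdet : 0 < a*d - b*c) :
    (a + c - b - d < 0 ↔ 2*b / (a - d - 2*b + Real.sqrt ((a - d)^2 + 4*b*c)) < -1) ∧
    (2*b / (a - d - 2*b + Real.sqrt ((a - d)^2 + 4*b*c)) < -1
      ↔ a - d + Real.sqrt ((a - d)^2 + 4*b*c) < 2*b) := by
  set g := Real.sqrt ((a - d)^2 + 4*b*c) with hgdef
  have hg0 : 0 ≤ g := Real.sqrt_nonneg _
  have hgsq : g^2 = (a - d)^2 + 4*b*c := Real.sq_sqrt (by positivity)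
  have hgt : d - a < g := by
    by_contra h
    push_neg at h
    nlinarith [mul_pos hb hc]
  -- (ii) ↔ (iii)
  have h23 : 2*b / (a - d - 2*b + g) < -1 ↔ a - d + g < 2*b := by
    constructor
    · intro h
      by_contra hcon
      push_neg at hcon
      have hD : 0 ≤ a - d - 2*b + g := by linarith
      have : 0 ≤ 2*b / (a - d - 2*b + g) := div_nonneg (by linarith) hD
      linarith
    · intro h
      have hD : a - d - 2*b + g < 0 := by linarith
      rw [div_lt_iff_of_neg hD]
      linarith
  -- (i) ↔ (iii)
  have h13 : a + c - b - d < 0 ↔ a - d + g < 2*b := by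
    constructor
    · intro h
      by_contra hcon
      push_neg at hcon
      nlinarith [mul_pos hb hc]
    · intro h
      nlinarith [mul_pos hb hc]
  exact ⟨h13.trans h23.symm, h23⟩
end

section
/- If A = [[a,b],[c,d]] has positive entries, det A > 0, and α_A = a+c−b−d > 0, then the smaller root r_A = −(γ_A+β_A)/(2α_A) of the quadratic q_A(z) = α_A z² + β_A z − b satisfies r_A > −1, where β_A = a−d−2b and γ_A = √((a−d)²+4bc). -/
theorem stmt_14 (a b c d : ℝ) (ha : 0 < a) (hb : 0 < b) (hc : 0 < c) (hd : 0 < d)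
    (hdet : 0 < a*d - b*c) (hα : 0 < a + c - b - d) :
    -1 < -(Real.sqrt ((a - d)^2 + 4*b*c) + (a - d - 2*b)) / (2*(a + c - b - d)) := by
  have hpos : 0 < 2*(a + c - b - d) := by linarith
  rw [neg_div, neg_lt_neg_iff, div_lt_one hpos]
  have h1 : Real.sqrt ((a - d)^2 + 4*b*c) < a + 2*c - d := by
    rw [show a + 2*c - d = Real.sqrt ((a + 2*c - d)^2) from
      (Real.sqrt_sq (by linarith)).symm]
    apply Real.sqrt_lt_sqrt (by positivity)
    nlinarith
  linarith
end

section
/- Let (A₀, A₁) be a pair of 2×2 positive matrices with positive determinants satisfying α_{A₁} < 0 < α_{A₀}. Then q_{A₁}(ϱ_{A₀}) < 0 < q_{A₀}(ϱ_{A₁}), where q_A(z) = α_A z² + β_A z − b (b the top-right entry of A) and ϱ_A = (γ_A − β_A)/(2α_A). -/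
theorem stmt_15 (a₀ b₀ c₀ d₀ a₁ b₁ c₁ d₁ : ℝ)
    (ha₀ : 0 < a₀) (hb₀ : 0 < b₀) (hc₀ : 0 < c₀) (hd₀ : 0 < d₀)
    (ha₁ : 0 < a₁) (hb₁ : 0 < b₁) (hc₁ : 0 < c₁) (hd₁ : 0 < d₁)
    (hdet₀ : 0 < a₀*d₀ - b₀*c₀) (hdet₁ : 0 < a₁*d₁ - b₁*c₁)
    (hα₁ : a₁ + c₁ - b₁ - d₁ < 0) (hα₀ : 0 < a₀ + c₀ - b₀ - d₀) :
    (a₁ + c₁ - b₁ - d₁) *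
        ((Real.sqrt ((a₀ - d₀)^2 + 4*b₀*c₀) - (a₀ - d₀ - 2*b₀)) / (2*(a₀ + c₀ - b₀ - d₀)))^2
      + (a₁ - d₁ - 2*b₁) *
        ((Real.sqrt ((a₀ - d₀)^2 + 4*b₀*c₀) - (a₀ - d₀ - 2*b₀)) / (2*(a₀ + c₀ - b₀ - d₀)))
      - b₁ < 0 ∧
    0 < (a₀ + c₀ - b₀ - d₀) *
        ((Real.sqrt ((a₁ - d₁)^2 + 4*b₁*c₁) - (a₁ - d₁ - 2*b₁)) / (2*(a₁ + c₁ - b₁ - d₁)))^2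
      + (a₀ - d₀ - 2*b₀) *
        ((Real.sqrt ((a₁ - d₁)^2 + 4*b₁*c₁) - (a₁ - d₁ - 2*b₁)) / (2*(a₁ + c₁ - b₁ - d₁)))
      - b₀ := by
  have sqnn0 : (0:ℝ) ≤ (a₀ - d₀)^2 + 4*b₀*c₀ := by positivity
  have sqnn1 : (0:ℝ) ≤ (a₁ - d₁)^2 + 4*b₁*c₁ := by positivity
  set γ₀ := Real.sqrt ((a₀ - d₀)^2 + 4*b₀*c₀) with hγ₀
  set γ₁ := Real.sqrt ((a₁ - d₁)^2 + 4*b₁*c₁) with hγ₁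
  have hγ₀nn : 0 ≤ γ₀ := Real.sqrt_nonneg _
  have hγ₀sq : γ₀^2 = (a₀ - d₀)^2 + 4*b₀*c₀ := Real.sq_sqrt sqnn0
  have hγ₁nn : 0 ≤ γ₁ := Real.sqrt_nonneg _
  have hγ₁sq : γ₁^2 = (a₁ - d₁)^2 + 4*b₁*c₁ := Real.sq_sqrt sqnn1
  set ρ₀ := (γ₀ - (a₀ - d₀ - 2*b₀)) / (2*(a₀ + c₀ - b₀ - d₀)) with hρ₀def
  set ρ₁ := (γ₁ - (a₁ - d₁ - 2*b₁)) / (2*(a₁ + c₁ - b₁ - d₁)) with hρ₁def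
  -- γ₀ > β₀, hence ρ₀ > 0
  have hγ₀gtβ : a₀ - d₀ - 2*b₀ < γ₀ := by
    nlinarith [mul_pos hα₀ hb₀, hγ₀nn, hγ₀sq]
  have hρ₀pos : 0 < ρ₀ := div_pos (by linarith) (by linarith)
  -- γ₁ > β₁ - 2α₁ = d₁ - a₁ - 2c₁, hence ρ₁ < -1
  have hγ₁gt : d₁ - a₁ - 2*c₁ < γ₁ := by
    nlinarith [mul_pos hc₁ (show (0:ℝ) < b₁ + d₁ - a₁ - c₁ by linarith), hγ₁nn, hγ₁sq]
  have hρ₁lt : ρ₁ < -1 := by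
    rw [hρ₁def, div_lt_iff_of_neg (by linarith : 2*(a₁ + c₁ - b₁ - d₁) < 0)]
    linarith
  constructor
  · -- q₁ has all negative coefficients and ρ₀ > 0
    have hβ₁ : a₁ - d₁ - 2*b₁ < 0 := by linarith
    have t1 : (a₁ + c₁ - b₁ - d₁) * ρ₀^2 < 0 :=
      mul_neg_of_neg_of_pos hα₁ (by positivity)
    have t2 : (a₁ - d₁ - 2*b₁) * ρ₀ < 0 := mul_neg_of_neg_of_pos hβ₁ hρ₀pos
    linarith
  · -- q₀(ρ₁) = c₀ + (ρ₁+1)(α₀(ρ₁-1)+β₀) > 0 since ρ₁ < -1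
    have h1 : ρ₁ + 1 < 0 := by linarith
    have h2 : (a₀ + c₀ - b₀ - d₀)*(ρ₁ - 1) + (a₀ - d₀ - 2*b₀) < 0 := by
      nlinarith [mul_lt_mul_of_pos_left (show ρ₁ - 1 < -2 by linarith) hα₀]
    nlinarith [mul_pos_of_neg_of_neg h1 h2]
end

section
/- For A = [[a,b],[c,d]] with positive entries and for each k ≥ 1, writing T_{A^k} for the Möbius map induced by A^k, the finite sum Σ_{n=1}^{k} (log S_A' ∘ T_A^n)'(x) equals 2/(x + δ_{A^k}), where δ_B = (b_B+d_B)/α_B for B = [[a_B,b_B],[c_B,d_B]], S_A = T_A^{−1}, and the identity holds wherever all expressions are defined. -/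
open Real Filter

/-- numerator function of the Möbius map of `M^n` -/
def nf16 (M : Matrix (Fin 2) (Fin 2) ℝ) (n : ℕ) (y : ℝ) : ℝ :=
  ((M^n) 0 0 - (M^n) 0 1) * y + (M^n) 0 1

/-- denominator (cocycle) function of the Möbius map of `M^n` -/
def wf16 (M : Matrix (Fin 2) (Fin 2) ℝ) (n : ℕ) (y : ℝ) : ℝ :=
  ((M^n) 0 0 + (M^n) 1 0 - (M^n) 0 1 - (M^n) 1 1) * y + ((M^n) 0 1 + (M^n) 1 1)

/-- for A = [[a,b],[c,d]] positive with det A > 0, and k ≥ 1,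
the finite sum ∑_{n=1}^k (log S_A' ∘ T_A^n)'(x) equals 2/(x + δ_{A^k}),
wherever all expressions are defined. -/
theorem stmt_16 (a b c d : ℝ) (ha : 0 < a) (hb : 0 < b) (hc : 0 < c) (hd : 0 < d)
    (hdet : 0 < a*d - b*c) (hα : a + c - b - d ≠ 0)
    (k : ℕ) (hk : 1 ≤ k)
    (M : Matrix (Fin 2) (Fin 2) ℝ) (hM : M = !![a, b; c, d])
    (hαk : (M^k) 0 0 + (M^k) 1 0 - (M^k) 0 1 - (M^k) 1 1 ≠ 0)
    (T S : ℝ → ℝ)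
    (hT : T = fun x => ((a - b)*x + b) / ((a + c - b - d)*x + b + d))
    (hS : S = fun x => ((b + d)*x - b) / (-(a + c - b - d)*x + a - b))
    (x : ℝ) (hx : x ∈ Set.Icc (0:ℝ) 1)
    (hden : x + ((M^k) 0 1 + (M^k) 1 1) /
        ((M^k) 0 0 + (M^k) 1 0 - (M^k) 0 1 - (M^k) 1 1) ≠ 0) :
    ∑ n ∈ Finset.Icc 1 k, deriv (fun y => Real.log (deriv S (T^[n] y))) x
      = 2 / (x + ((M^k) 0 1 + (M^k) 1 1) /
          ((M^k) 0 0 + (M^k) 1 0 - (M^k) 0 1 - (M^k) 1 1)) := by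
  obtain ⟨hx0, hx1⟩ := hx
  have hM00 : M 0 0 = a := by simp [hM]
  have hM01 : M 0 1 = b := by simp [hM]
  have hM10 : M 1 0 = c := by simp [hM]
  have hM11 : M 1 1 = d := by simp [hM]
  -- entry recurrences
  have hrec : ∀ n : ℕ, ∀ i j : Fin 2,
      (M ^ (n+1)) i j = M i 0 * (M ^ n) 0 j + M i 1 * (M ^ n) 1 j := by
    intro n i j
    rw [pow_succ', Matrix.mul_apply, Fin.sum_univ_two]
  have e1 : ∀ n : ℕ, (M ^ (n+1)) 0 0 = a * (M^n) 0 0 + b * (M^n) 1 0 := by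
    intro n; rw [hrec, hM00, hM01]
  have e2 : ∀ n : ℕ, (M ^ (n+1)) 0 1 = a * (M^n) 0 1 + b * (M^n) 1 1 := by
    intro n; rw [hrec, hM00, hM01]
  have e3 : ∀ n : ℕ, (M ^ (n+1)) 1 0 = c * (M^n) 0 0 + d * (M^n) 1 0 := by
    intro n; rw [hrec, hM10, hM11]
  have e4 : ∀ n : ℕ, (M ^ (n+1)) 1 1 = c * (M^n) 0 1 + d * (M^n) 1 1 := by
    intro n; rw [hrec, hM10, hM11]
  have h000 : (M ^ 0) 0 0 = 1 := by simp
  have h001 : (M ^ 0) 0 1 = 0 := by simp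
  have h010 : (M ^ 0) 1 0 = 0 := by simp
  have h011 : (M ^ 0) 1 1 = 1 := by simp
  -- positivity of entries of M^n for n ≥ 1
  have hpos : ∀ n : ℕ, 1 ≤ n →
      0 < (M^n) 0 0 ∧ 0 < (M^n) 0 1 ∧ 0 < (M^n) 1 0 ∧ 0 < (M^n) 1 1 := by
    intro n hn
    induction n, hn using Nat.le_induction with
    | base =>
      rw [pow_one]
      exact ⟨by rw [hM00]; exact ha, by rw [hM01]; exact hb,
        by rw [hM10]; exact hc, by rw [hM11]; exact hd⟩
    | succ n hn ih =>
      obtain ⟨p1, p2, p3, p4⟩ := ih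
      refine ⟨?_, ?_, ?_, ?_⟩
      · rw [e1]; positivity
      · rw [e2]; positivity
      · rw [e3]; positivity
      · rw [e4]; positivity
  -- positivity of the cocycle at every point of [0,1], in particular at x
  have hwpos : ∀ n : ℕ, 0 < wf16 M n x := by
    intro n
    rcases Nat.eq_zero_or_pos n with h | h
    · subst h; simp [wf16, h000, h001, h010, h011]
    · obtain ⟨p1, p2, p3, p4⟩ := hpos n h
      unfold wf16
      rcases lt_or_ge x 1 with h1 | h1
      · nlinarith [mul_nonneg (add_pos p1 p3).le hx0,
          mul_pos (add_pos p2 p4) (by linarith : (0:ℝ) < 1 - x)]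
      · have hx1' : x = 1 := le_antisymm hx1 h1
        subst hx1'; nlinarith
  -- continuity / eventual positivity
  have hwev : ∀ n : ℕ, ∀ᶠ y in nhds x, 0 < wf16 M n y := by
    intro n
    have hc : Continuous (wf16 M n) := by unfold wf16; fun_prop
    have : IsOpen {y : ℝ | 0 < wf16 M n y} := isOpen_lt continuous_const hc
    exact this.mem_nhds (hwpos n)
  -- iterate formula
  have hiter : ∀ n : ℕ, ∀ y : ℝ, (∀ j : ℕ, j ≤ n → 0 < wf16 M j y) →
      T^[n] y = nf16 M n y / wf16 M n y := by
    intro n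
    induction n with
    | zero =>
      intro y hy
      simp [nf16, wf16, h000, h001, h010, h011]
    | succ n ih =>
      intro y hy
      have hwn : wf16 M n y ≠ 0 := (hy n (Nat.le_succ n)).ne'
      have hwn1 : wf16 M (n+1) y ≠ 0 := (hy (n+1) le_rfl).ne'
      have hnum2 : (a-b) * nf16 M n y + b * wf16 M n y = nf16 M (n+1) y := by
        simp only [nf16, wf16, e1, e2, e3, e4]; ring
      have hden2 : (a+c-b-d) * nf16 M n y + (b+d) * wf16 M n y = wf16 M (n+1) y := by
        simp only [nf16, wf16, e1, e2, e3, e4]; ring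
      rw [Function.iterate_succ_apply', ih y (fun j hj => hy j (hj.trans (Nat.le_succ n))), hT]
      simp only
      have hd1 : (a+c-b-d) * (nf16 M n y / wf16 M n y) + b + d
          = wf16 M (n+1) y / wf16 M n y := by
        field_simp
        linear_combination hden2
      have hn1 : (a-b) * (nf16 M n y / wf16 M n y) + b
          = nf16 M (n+1) y / wf16 M n y := by
        field_simp
        linear_combination hnum2
      rw [hn1, hd1, div_div_div_cancel_right₀ hwn]
  -- derivative of S
  have hSd : ∀ z : ℝ, -(a+c-b-d)*z + a - b ≠ 0 →
      deriv S z = (a*d-b*c) / (-(a+c-b-d)*z + a - b)^2 := by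
    intro z hz
    have h1 : HasDerivAt (fun z : ℝ => (b+d)*z - b) (b+d) z := by
      simpa using ((hasDerivAt_id z).const_mul (b+d)).sub_const b
    have h2 : HasDerivAt (fun z : ℝ => -(a+c-b-d)*z + a - b) (-(a+c-b-d)) z := by
      simpa using (((hasDerivAt_id z).const_mul (-(a+c-b-d))).add_const a).sub_const b
    rw [hS, show (fun x => ((b + d) * x - b) / (-(a + c - b - d) * x + a - b)) = ((fun z : ℝ => (b+d)*z - b) / fun z : ℝ => -(a+c-b-d)*z + a - b) from rfl, (h1.div h2 hz).deriv]
    field_simp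
    ring
  -- the key derivative computation for each n = m+1
  have hkey : ∀ m : ℕ,
      deriv (fun y => Real.log (deriv S (T^[m+1] y))) x
        = 2 * ((M^(m+1)) 0 0 + (M^(m+1)) 1 0 - (M^(m+1)) 0 1 - (M^(m+1)) 1 1)
              / wf16 M (m+1) x
          - 2 * ((M^m) 0 0 + (M^m) 1 0 - (M^m) 0 1 - (M^m) 1 1) / wf16 M m x := by
    intro m
    have hall : ∀ᶠ y in nhds x, ∀ j : ℕ, j ≤ m+1 → 0 < wf16 M j y := by
      have : ∀ᶠ y in nhds x, ∀ j ∈ Finset.range (m+2), 0 < wf16 M j y :=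
        (Filter.eventually_all_finset _).2 (fun j _ => hwev j)
      filter_upwards [this] with y hy j hj
      exact hy j (Finset.mem_range.2 (Nat.lt_succ_of_le hj))
    have hid : ∀ y : ℝ, -(a+c-b-d) * nf16 M (m+1) y + (a - b) * wf16 M (m+1) y
        = (a*d-b*c) * wf16 M m y := by
      intro y
      simp only [nf16, wf16, e1, e2, e3, e4]; ring
    have hev : (fun y => Real.log (deriv S (T^[m+1] y)))
        =ᶠ[nhds x] fun y => 2 * Real.log (wf16 M (m+1) y)
            - 2 * Real.log (wf16 M m y) - Real.log (a*d-b*c) := by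
      filter_upwards [hall] with y hy
      have hwm : 0 < wf16 M m y := hy m (Nat.le_succ m)
      have hwm1 : 0 < wf16 M (m+1) y := hy (m+1) le_rfl
      rw [hiter (m+1) y hy]
      have hzval : -(a+c-b-d) * (nf16 M (m+1) y / wf16 M (m+1) y) + a - b
          = (a*d-b*c) * wf16 M m y / wf16 M (m+1) y := by
        field_simp
        linear_combination hid y
      have hzne : -(a+c-b-d) * (nf16 M (m+1) y / wf16 M (m+1) y) + a - b ≠ 0 := by
        rw [hzval]
        positivity
      rw [hSd _ hzne, hzval]
      have harg : (a*d-b*c) / ((a*d-b*c) * wf16 M m y / wf16 M (m+1) y)^2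
          = (wf16 M (m+1) y)^2 / ((a*d-b*c) * (wf16 M m y)^2) := by
        field_simp
      rw [harg, Real.log_div (by positivity) (by positivity),
        Real.log_mul (by positivity) (by positivity), Real.log_pow, Real.log_pow]
      push_cast
      ring
    rw [hev.deriv_eq]
    have hwd1 : HasDerivAt (fun y => wf16 M (m+1) y)
        ((M^(m+1)) 0 0 + (M^(m+1)) 1 0 - (M^(m+1)) 0 1 - (M^(m+1)) 1 1) x := by
      unfold wf16
      simpa using (((hasDerivAt_id x).const_mul
        ((M^(m+1)) 0 0 + (M^(m+1)) 1 0 - (M^(m+1)) 0 1 - (M^(m+1)) 1 1)).add_const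
          ((M^(m+1)) 0 1 + (M^(m+1)) 1 1))
    have hwd0 : HasDerivAt (fun y => wf16 M m y)
        ((M^m) 0 0 + (M^m) 1 0 - (M^m) 0 1 - (M^m) 1 1) x := by
      unfold wf16
      simpa using (((hasDerivAt_id x).const_mul
        ((M^m) 0 0 + (M^m) 1 0 - (M^m) 0 1 - (M^m) 1 1)).add_const
          ((M^m) 0 1 + (M^m) 1 1))
    have hl1 := (hwd1.log (hwpos (m+1)).ne')
    have hl0 := (hwd0.log (hwpos m).ne')
    have hg := ((hl1.const_mul 2).sub (hl0.const_mul 2)).sub_const (Real.log (a*d-b*c))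
    rw [show (fun y => 2 * log (wf16 M (m + 1) y) - 2 * log (wf16 M m y) - log (a * d - b * c)) = fun x => ((fun y => 2 * log (wf16 M (m + 1) y)) - fun y => 2 * log (wf16 M m y)) x - log (a * d - b * c) from rfl, hg.deriv]
    ring
  -- assemble the telescoping sum
  have hF : ∀ n : ℕ, True := fun _ => trivial
  rw [← Finset.Ico_add_one_right_eq_Icc, Finset.sum_Ico_eq_sum_range]
  simp only [Nat.add_sub_cancel]
  have hrw : ∀ i ∈ Finset.range k,
      deriv (fun y => Real.log (deriv S (T^[1+i] y))) x
        = (fun n => 2 * ((M^n) 0 0 + (M^n) 1 0 - (M^n) 0 1 - (M^n) 1 1) / wf16 M n x) (i+1)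
          - (fun n => 2 * ((M^n) 0 0 + (M^n) 1 0 - (M^n) 0 1 - (M^n) 1 1) / wf16 M n x) i := by
    intro i _
    rw [Nat.add_comm 1 i]
    exact hkey i
  rw [Finset.sum_congr rfl hrw, Finset.sum_range_sub
    (fun n => 2 * ((M^n) 0 0 + (M^n) 1 0 - (M^n) 0 1 - (M^n) 1 1) / wf16 M n x) k]
  have h0 : 2 * ((M^0) 0 0 + (M^0) 1 0 - (M^0) 0 1 - (M^0) 1 1) / wf16 M 0 x = 0 := by
    rw [h000, h001, h010, h011]; norm_num
  rw [h0, sub_zero]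
  unfold wf16
  have key : ∀ (α s t : ℝ), α ≠ 0 → t + s/α ≠ 0 → 2*α/(α*t + s) = 2/(t + s/α) := by
    intro α s t h1 h2
    have h3 : α*t + s = α*(t + s/α) := by field_simp
    rw [h3, mul_comm 2 α, mul_div_mul_left _ _ h1]
  exact key _ _ _ hαk hden
end

section
/- For A = [[a,b],[c,d]] with positive entries (and α_{A^k} ≠ 0 for all large k), the sequence δ_{A^k} = (b_k + d_k)/α_{A^k} converges to ϱ_A as k → ∞, where b_k, d_k are the (1,2) and (2,2) entries of A^k, α_B = a_B+c_B−b_B−d_B, and ϱ_A = 2b/(a−d−2b+√((a−d)²+4bc)). -/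
lemma aux_pow_formula (a b c d P Q : ℝ) (hPQ : P - Q ≠ 0)
    (hT : P + Q = a + d) (hD : P * Q = a*d - b*c) (k : ℕ) :
    (!![a,b;c,d] : Matrix (Fin 2) (Fin 2) ℝ)^k =
      !![ (P^k - Q^k)/(P-Q) * a + (P*Q^k - Q*P^k)/(P-Q),
          (P^k - Q^k)/(P-Q) * b;
          (P^k - Q^k)/(P-Q) * c,
          (P^k - Q^k)/(P-Q) * d + (P*Q^k - Q*P^k)/(P-Q)] := by
  induction k with
  | zero =>
    rw [pow_zero, Matrix.one_fin_two]
    norm_num [div_self hPQ]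
  | succ k ih =>
    rw [pow_succ, ih, Matrix.mul_fin_two]
    have e1 : (P^(k+1) - Q^(k+1))/(P-Q) = (a+d) * ((P^k - Q^k)/(P-Q)) + (P*Q^k - Q*P^k)/(P-Q) := by
      rw [← hT]; field_simp; ring
    have e2 : (P*Q^(k+1) - Q*P^(k+1))/(P-Q) = -(a*d - b*c) * ((P^k - Q^k)/(P-Q)) := by
      rw [← hD]; field_simp; ring
    rw [e1, e2]
    congr 1 <;> ring

theorem stmt_17 (a b c d : ℝ) (ha : 0 < a) (hb : 0 < b) (hc : 0 < c) (hd : 0 < d)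
    (M : Matrix (Fin 2) (Fin 2) ℝ) (hM : M = !![a, b; c, d])
    (hαk : ∀ᶠ k in Filter.atTop,
      (M^k) 0 0 + (M^k) 1 0 - (M^k) 0 1 - (M^k) 1 1 ≠ 0) :
    Filter.Tendsto
      (fun k : ℕ => ((M^k) 0 1 + (M^k) 1 1) /
        ((M^k) 0 0 + (M^k) 1 0 - (M^k) 0 1 - (M^k) 1 1))
      Filter.atTop
      (nhds (2*b / (a - d - 2*b + Real.sqrt ((a - d)^2 + 4*b*c)))) := by
  set s := Real.sqrt ((a - d)^2 + 4*b*c) with hs_def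
  have hs2 : s^2 = (a - d)^2 + 4*b*c := Real.sq_sqrt (by nlinarith)
  have hs0 : 0 ≤ s := Real.sqrt_nonneg _
  clear_value s
  have hs_gt : |a - d| < s := by
    have h1 : (a-d)^2 < s^2 := by nlinarith
    nlinarith [abs_nonneg (a - d), sq_abs (a - d)]
  have hs_pos : 0 < s := lt_of_le_of_lt (abs_nonneg _) hs_gt
  have had1 : a - d < s := lt_of_le_of_lt (le_abs_self _) hs_gt
  have had2 : d - a < s := by
    have := lt_of_le_of_lt (neg_le_abs (a - d)) hs_gt; linarith
  set P := (a + d + s)/2 with hP_def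
  set Q := (a + d - s)/2 with hQ_def
  have hPQ : P - Q = s := by rw [hP_def, hQ_def]; ring
  have hT : P + Q = a + d := by rw [hP_def, hQ_def]; ring
  have hD : P * Q = a*d - b*c := by rw [hP_def, hQ_def]; nlinarith [hs2]
  have hPpos : 0 < P := by rw [hP_def]; linarith
  have hQlt : Q < P := by rw [hP_def, hQ_def]; linarith
  have hQgt : -P < Q := by rw [hP_def, hQ_def]; linarith
  have hbdQ : b + d - Q = (2*b + d - a + s)/2 := by rw [hQ_def]; ring
  clear_value P Q
  have hPne : P ≠ 0 := ne_of_gt hPpos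
  have hPQ' : P - Q ≠ 0 := by rw [hPQ]; exact ne_of_gt hs_pos
  have key : ∀ k : ℕ, M^k =
      !![ (P^k - Q^k)/(P-Q) * a + (P*Q^k - Q*P^k)/(P-Q),
          (P^k - Q^k)/(P-Q) * b;
          (P^k - Q^k)/(P-Q) * c,
          (P^k - Q^k)/(P-Q) * d + (P*Q^k - Q*P^k)/(P-Q)] := by
    intro k; rw [hM]; exact aux_pow_formula a b c d P Q hPQ' hT hD k
  set r := Q / P with hr_def
  have hr : |r| < 1 := by
    rw [hr_def, abs_div, abs_of_pos hPpos, div_lt_one hPpos, abs_lt]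
    exact ⟨by linarith, hQlt⟩
  clear_value r
  have hQP : ∀ k : ℕ, Q^k = P^k * r^k := by
    intro k
    rw [hr_def, div_pow, mul_comm, div_mul_cancel₀ _ (pow_ne_zero k hPne)]
  -- entrywise formulas
  have hαeq : ∀ k : ℕ, (M^k) 0 0 + (M^k) 1 0 - (M^k) 0 1 - (M^k) 1 1
      = (P^k - Q^k)/(P-Q) * (a + c - b - d) := by
    intro k
    rw [key k]
    simp [Matrix.cons_val_zero, Matrix.cons_val_one, Matrix.head_cons]
    ring
  have hnum : ∀ k : ℕ, (M^k) 0 1 + (M^k) 1 1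
      = (P^k - Q^k)/(P-Q) * (b + d) + (P*Q^k - Q*P^k)/(P-Q) := by
    intro k
    rw [key k]
    simp [Matrix.cons_val_zero, Matrix.cons_val_one, Matrix.head_cons]
    ring
  -- E ≠ 0
  have hE : a + c - b - d ≠ 0 := by
    obtain ⟨k, hk1, hkne⟩ := ((Filter.eventually_ge_atTop 1).and hαk).exists
    intro hE0
    exact hkne (by rw [hαeq k, hE0, mul_zero])
  -- the simplified sequence
  set g : ℕ → ℝ := fun k => ((b+d)*(1 - r^k) + (P*r^k - Q)) / ((1 - r^k)*(a + c - b - d)) with hg_def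
  have heq : ∀ k : ℕ, 1 ≤ k → ((M^k) 0 1 + (M^k) 1 1) /
        ((M^k) 0 0 + (M^k) 1 0 - (M^k) 0 1 - (M^k) 1 1) = g k := by
    intro k hk
    rw [hnum k, hαeq k, hPQ, hg_def]
    have h1 : (P^k - Q^k)/s * (b+d) + (P*Q^k - Q*P^k)/s
        = (P^k/s) * ((b+d)*(1 - r^k) + (P*r^k - Q)) := by
      rw [hQP k]; field_simp
    have h2 : (P^k - Q^k)/s * (a + c - b - d)
        = (P^k/s) * ((1 - r^k)*(a + c - b - d)) := by
      rw [hQP k]; field_simp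
    have h3 : P^k/s ≠ 0 := by positivity
    rw [h1, h2, mul_div_mul_left _ _ h3]
  -- limit of g
  have hrk : Filter.Tendsto (fun k : ℕ => r^k) Filter.atTop (nhds 0) :=
    tendsto_pow_atTop_nhds_zero_of_abs_lt_one hr
  have hden_lim : ((1:ℝ) - 0) * (a + c - b - d) ≠ 0 := by
    rw [sub_zero, one_mul]; exact hE
  have hg_lim : Filter.Tendsto g Filter.atTop
      (nhds (((b+d)*(1 - (0:ℝ)) + (P*0 - Q)) / ((1 - (0:ℝ))*(a + c - b - d)))) := by
    apply Filter.Tendsto.div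
    · exact (Filter.Tendsto.mul tendsto_const_nhds (Filter.Tendsto.sub tendsto_const_nhds hrk)).add
        ((Filter.Tendsto.mul tendsto_const_nhds hrk).sub tendsto_const_nhds)
    · exact (Filter.Tendsto.sub tendsto_const_nhds hrk).mul tendsto_const_nhds
    · exact hden_lim
  -- identify the limit value
  have hden2 : a - d - 2*b + s ≠ 0 := by
    intro h0
    apply hE
    have hs_eq : s = 2*b + d - a := by linarith
    have h4 : (2*b + d - a)^2 = (a-d)^2 + 4*b*c := by rw [← hs_eq]; exact hs2
    have h5 : 4*b*(a + c - b - d) = 0 := by linear_combination -h4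
    rcases mul_eq_zero.mp h5 with h | h
    · nlinarith
    · exact h
  have hval : ((b+d)*(1 - (0:ℝ)) + (P*0 - Q)) / ((1 - (0:ℝ))*(a + c - b - d))
      = 2*b / (a - d - 2*b + s) := by
    rw [mul_zero, zero_sub, sub_zero, one_mul]
    rw [div_eq_div_iff hE hden2]
    linear_combination (-(a - d - 2*b + s))*hQ_def + (1/2)*hs2
  rw [← hval]
  exact Filter.Tendsto.congr' (((Filter.eventually_ge_atTop 1).mono fun k hk => (heq k hk).symm)) hg_lim
end

section
/- Let (A₀,A₁) be a pair of 2×2 positive matrices with positive determinants satisfying a₀/c₀ < b₁/d₁ and α_{A₁} < 0 < α_{A₀}. Then the Möbius function x ↦ (x+ϱ_{A₀})/((b₁+d₁−α_{A₁}ϱ_{A₀})x + (a₁−b₁)ϱ_{A₀} − b₁) has strictly negative derivative wherever defined. -/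
theorem stmt_18 (a₀ b₀ c₀ d₀ a₁ b₁ c₁ d₁ : ℝ)
    (ha₀ : 0 < a₀) (hb₀ : 0 < b₀) (hc₀ : 0 < c₀) (hd₀ : 0 < d₀)
    (ha₁ : 0 < a₁) (hb₁ : 0 < b₁) (hc₁ : 0 < c₁) (hd₁ : 0 < d₁)
    (hdet₀ : 0 < a₀*d₀ - b₀*c₀) (hdet₁ : 0 < a₁*d₁ - b₁*c₁)
    (hord : a₀/c₀ < b₁/d₁)
    (hα₁ : a₁ + c₁ - b₁ - d₁ < 0) (hα₀ : 0 < a₀ + c₀ - b₀ - d₀)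
    (ϱ₀ : ℝ)
    (hϱ₀ : ϱ₀ = (Real.sqrt ((a₀ - d₀)^2 + 4*b₀*c₀) - (a₀ - d₀ - 2*b₀)) / (2*(a₀ + c₀ - b₀ - d₀))) :
    ∀ x : ℝ, (b₁ + d₁ - (a₁ + c₁ - b₁ - d₁)*ϱ₀)*x + (a₁ - b₁)*ϱ₀ - b₁ ≠ 0 →
      deriv (fun y => (y + ϱ₀) / ((b₁ + d₁ - (a₁ + c₁ - b₁ - d₁)*ϱ₀)*y + (a₁ - b₁)*ϱ₀ - b₁)) x < 0 := by
  intro x hx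
  set s := Real.sqrt ((a₀ - d₀)^2 + 4*b₀*c₀) with hs_def
  have hs0 : 0 ≤ s := Real.sqrt_nonneg _
  have hs : s^2 = (a₀ - d₀)^2 + 4*b₀*c₀ := Real.sq_sqrt (by positivity)
  have hnum : 0 < s - (a₀ - d₀ - 2*b₀) := by
    nlinarith [mul_pos hb₀ hα₀, sq_nonneg (s + (a₀ - d₀ - 2*b₀))]
  have hϱpos : 0 < ϱ₀ := by
    rw [hϱ₀]; exact div_pos hnum (by linarith)
  -- key inequality: q₁(ϱ₀) < 0
  have hq : (a₁ + c₁ - b₁ - d₁)*ϱ₀^2 + (a₁ - d₁ - 2*b₁)*ϱ₀ - b₁ < 0 := by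
    nlinarith [mul_pos hϱpos hϱpos, mul_pos hc₁ hϱpos, mul_pos hb₁ hϱpos]
  set P := b₁ + d₁ - (a₁ + c₁ - b₁ - d₁)*ϱ₀ with hP
  have hf : HasDerivAt (fun y : ℝ => y + ϱ₀) 1 x := (hasDerivAt_id x).add_const ϱ₀
  have hg : HasDerivAt (fun y : ℝ => P*y + (a₁ - b₁)*ϱ₀ - b₁) P x := by
    have h := ((hasDerivAt_id x).const_mul P).add_const ((a₁ - b₁)*ϱ₀ - b₁)
    simpa [mul_one, add_sub_assoc] using h
  have hdiv : HasDerivAt (fun y => (y + ϱ₀) / (P*y + (a₁ - b₁)*ϱ₀ - b₁)) _ x := hf.div hg hx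
  rw [hdiv.deriv]
  apply div_neg_of_neg_of_pos
  · have : 1 * (P*x + (a₁ - b₁)*ϱ₀ - b₁) - (x + ϱ₀) * P
        = (a₁ + c₁ - b₁ - d₁)*ϱ₀^2 + (a₁ - d₁ - 2*b₁)*ϱ₀ - b₁ := by
      rw [hP]; ring
    rw [this]; exact hq
  · exact pow_two_pos_of_ne_zero hx
end

section
/- Let (A₀,A₁) be a pair of 2×2 positive matrices with positive determinants satisfying a₀/c₀ < b₁/d₁ and α_{A₁} < 0 < α_{A₀}. For i ∈ {0,1}, the quantity Δ_i = log( (1+ϱ_{A_i})(b₁/(b₁+d₁)+ϱ_{A_i}) / (ϱ_{A_i}(a₀/(a₀+c₀)+ϱ_{A_i})) ) satisfies Δ₁ < 0 < Δ₀, where ϱ_A = (γ_A−β_A)/(2α_A). -/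
theorem stmt_19 (a₀ b₀ c₀ d₀ a₁ b₁ c₁ d₁ : ℝ)
    (ha₀ : 0 < a₀) (hb₀ : 0 < b₀) (hc₀ : 0 < c₀) (hd₀ : 0 < d₀)
    (ha₁ : 0 < a₁) (hb₁ : 0 < b₁) (hc₁ : 0 < c₁) (hd₁ : 0 < d₁)
    (hdet₀ : 0 < a₀*d₀ - b₀*c₀) (hdet₁ : 0 < a₁*d₁ - b₁*c₁)
    (hord : a₀/c₀ < b₁/d₁)
    (hα₁ : a₁ + c₁ - b₁ - d₁ < 0) (hα₀ : 0 < a₀ + c₀ - b₀ - d₀)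
    (ϱ₀ ϱ₁ : ℝ)
    (hϱ₀ : ϱ₀ = (Real.sqrt ((a₀ - d₀)^2 + 4*b₀*c₀) - (a₀ - d₀ - 2*b₀)) / (2*(a₀ + c₀ - b₀ - d₀)))
    (hϱ₁ : ϱ₁ = (Real.sqrt ((a₁ - d₁)^2 + 4*b₁*c₁) - (a₁ - d₁ - 2*b₁)) / (2*(a₁ + c₁ - b₁ - d₁))) :
    Real.log ((1 + ϱ₁) * (b₁/(b₁ + d₁) + ϱ₁) / (ϱ₁ * (a₀/(a₀ + c₀) + ϱ₁))) < 0 ∧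
    0 < Real.log ((1 + ϱ₀) * (b₁/(b₁ + d₁) + ϱ₀) / (ϱ₀ * (a₀/(a₀ + c₀) + ϱ₀))) := by
  have hac : 0 < a₀ + c₀ := by linarith
  have hbd : 0 < b₁ + d₁ := by linarith
  set P := a₀/(a₀+c₀) with hP
  set Q := b₁/(b₁+d₁) with hQ
  have hP0 : 0 < P := div_pos ha₀ hac
  have hP1 : P < 1 := (div_lt_one hac).mpr (by linarith)
  have hQ0 : 0 < Q := div_pos hb₁ hbd
  have hQ1 : Q < 1 := (div_lt_one hbd).mpr (by linarith)
  -- ϱ₀ > 0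
  have hs0 : (a₀ - d₀ - 2*b₀) < Real.sqrt ((a₀-d₀)^2 + 4*b₀*c₀) := by
    have h1 : |a₀ - d₀| ≤ Real.sqrt ((a₀-d₀)^2 + 4*b₀*c₀) := by
      rw [← Real.sqrt_sq_eq_abs]
      exact Real.sqrt_le_sqrt (by nlinarith)
    calc a₀ - d₀ - 2*b₀ < a₀ - d₀ := by linarith
      _ ≤ |a₀-d₀| := le_abs_self _
      _ ≤ _ := h1
  have hρ0 : 0 < ϱ₀ := by
    rw [hϱ₀]; exact div_pos (by linarith) (by linarith)
  -- ϱ₁ < -1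
  have hs1 : -(a₁ - d₁) - 2*c₁ < Real.sqrt ((a₁-d₁)^2 + 4*b₁*c₁) := by
    rcases le_or_gt (-(a₁-d₁) - 2*c₁) 0 with h | h
    · have : 0 < Real.sqrt ((a₁-d₁)^2 + 4*b₁*c₁) :=
        Real.sqrt_pos.mpr (by nlinarith)
      linarith
    · rw [show (-(a₁-d₁) - 2*c₁ : ℝ) = -((a₁-d₁) + 2*c₁) by ring] at h ⊢
      have := (Real.lt_sqrt (by linarith : (0:ℝ) ≤ -((a₁-d₁) + 2*c₁))).mpr
        (by nlinarith : (-((a₁-d₁) + 2*c₁))^2 < (a₁-d₁)^2 + 4*b₁*c₁)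
      exact this
  have hρ1 : ϱ₁ < -1 := by
    rw [hϱ₁, div_lt_iff_of_neg (by linarith : 2*(a₁ + c₁ - b₁ - d₁) < 0)]
    linarith
  constructor
  · apply Real.log_neg
    · exact div_pos (mul_pos_of_neg_of_neg (by linarith) (by linarith))
        (mul_pos_of_neg_of_neg (by linarith) (by linarith))
    · rw [div_lt_one (mul_pos_of_neg_of_neg (by linarith) (by linarith))]
      nlinarith [mul_pos (show (0:ℝ) < 1 + Q - P by linarith)
        (show (0:ℝ) < -1 - ϱ₁ by linarith)]
  · apply Real.log_pos
    rw [lt_div_iff₀ (mul_pos (by linarith) (by linarith))]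
    nlinarith
end
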